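/- The multivariate Beta function normalizes the Dirichlet density: the integral of ∏_{c=1}^K y_c^{α_c − 1} over the open (K−1)-simplex equals B(α) = ∏_{c=1}^K Γ(α_c) / Γ(Σ_{c=1}^K α_c), for all α_c > 0. -/

import Mathlib

open MeasureTheory Finset

/-- The multivariate Beta function `B(α) = ∏ Γ(α c) / Γ(∑ α c)`. -/
noncomputable def multiBeta {K : ℕ} (α : Fin K → ℝ) : ℝ :=
  (∏ c, Real.Gamma (α c)) / Real.Gamma (∑ c, α c)

/-- Parametrization of the open `K`-simplex in `ℝ^{K+1}` by its first `K` coordinates. -/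
def openSimplexParam (K : ℕ) : Set (Fin K → ℝ) :=
  {z | (∀ i, 0 < z i) ∧ ∑ i, z i < 1}

/-- The `c`-th coordinate of the full point `y ∈ ℝ^{K+1}` corresponding to the
parameter `z ∈ ℝ^K`, with `y_{K+1} = 1 - ∑ z`. -/
noncomputable def coordFull {K : ℕ} (c : Fin (K + 1)) (z : Fin K → ℝ) : ℝ :=
  if h : (c : ℕ) < K then z ⟨c, h⟩ else 1 - ∑ i, z i

/-- The Dirichlet density with parameter `α`, expressed in the simplex parametrization. -/
noncomputable def dirichletDensity {K : ℕ} (α : Fin (K + 1) → ℝ) (z : Fin K → ℝ) : ℝ :=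
  (1 / multiBeta α) * ∏ c, (coordFull c z) ^ (α c - 1)

lemma real_betaIntegral (a b : ℝ) (ha : 0 < a) (hb : 0 < b) :
    ∫ x in Set.Ioo (0:ℝ) 1, x ^ (a-1) * (1-x) ^ (b-1) =
      Real.Gamma a * Real.Gamma b / Real.Gamma (a+b) := by
  have hG : Real.Gamma (a+b) ≠ 0 := (Real.Gamma_pos_of_pos (by linarith)).ne'
  have hcongr : ∀ x ∈ Set.Ioo (0:ℝ) 1,
      (x:ℂ) ^ ((a:ℂ)-1) * ((1:ℂ)-x) ^ ((b:ℂ)-1) = ((x ^ (a-1) * (1-x) ^ (b-1) : ℝ) : ℂ) := by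
    intro x hx
    rw [show ((a:ℂ)-1) = ((a-1:ℝ):ℂ) by push_cast; ring,
      show ((b:ℂ)-1) = ((b-1:ℝ):ℂ) by push_cast; ring,
      show ((1:ℂ) - (x:ℂ)) = ((1-x:ℝ):ℂ) by push_cast; ring,
      ← Complex.ofReal_cpow hx.1.le, ← Complex.ofReal_cpow (by linarith [hx.2] : (0:ℝ) ≤ 1 - x)]
    push_cast
    ring
  have hbeta : Complex.betaIntegral a b
      = ((Real.Gamma a * Real.Gamma b / Real.Gamma (a+b) : ℝ) : ℂ) := by
    have h := Complex.Gamma_mul_Gamma_eq_betaIntegral (s := (a:ℂ)) (t := (b:ℂ))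
      (by simpa using ha) (by simpa using hb)
    rw [← Complex.ofReal_add, Complex.Gamma_ofReal, Complex.Gamma_ofReal,
      Complex.Gamma_ofReal] at h
    have hG' : ((Real.Gamma (a+b) : ℝ) : ℂ) ≠ 0 := by exact_mod_cast hG
    rw [Complex.ofReal_div, eq_div_iff hG']
    push_cast
    linear_combination -h
  have h1 : Complex.betaIntegral a b
      = ∫ x in Set.Ioo (0:ℝ) 1, ((x ^ (a-1) * (1-x) ^ (b-1) : ℝ) : ℂ) := by
    rw [Complex.betaIntegral, intervalIntegral.integral_of_le zero_le_one,
      MeasureTheory.integral_Ioc_eq_integral_Ioo]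
    exact setIntegral_congr_fun measurableSet_Ioo hcongr
  have h2 : (∫ x in Set.Ioo (0:ℝ) 1, ((x ^ (a-1) * (1-x) ^ (b-1) : ℝ) : ℂ))
      = ((∫ x in Set.Ioo (0:ℝ) 1, x ^ (a-1) * (1-x) ^ (b-1) : ℝ) : ℂ) := integral_ofReal
  rw [h1, h2] at hbeta
  exact_mod_cast hbeta

lemma integrableOn_beta (a b : ℝ) (ha : 0 < a) (hb : 0 < b) :
    IntegrableOn (fun x : ℝ => x ^ (a-1) * (1-x) ^ (b-1)) (Set.Ioo 0 1) := by
  have hc : IntegrableOn (fun x : ℝ => (x:ℂ) ^ ((a:ℂ)-1) * ((1:ℂ)-x) ^ ((b:ℂ)-1))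
      (Set.Ioc 0 1) := by
    have := Complex.betaIntegral_convergent (u := (a:ℂ)) (v := (b:ℂ))
      (by simpa using ha) (by simpa using hb)
    rw [intervalIntegrable_iff_integrableOn_Ioc_of_le zero_le_one] at this
    exact this
  have hc' : IntegrableOn (fun x : ℝ => (x:ℂ) ^ ((a:ℂ)-1) * ((1:ℂ)-x) ^ ((b:ℂ)-1))
      (Set.Ioo 0 1) := hc.mono_set Set.Ioo_subset_Ioc_self
  have h3 : IntegrableOn (fun x : ℝ => ((x:ℂ) ^ ((a:ℂ)-1) * ((1:ℂ)-x) ^ ((b:ℂ)-1)).re)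
      (Set.Ioo 0 1) := hc'.re
  refine IntegrableOn.congr_fun h3 (fun x hx => ?_) measurableSet_Ioo
  have : (x:ℂ) ^ ((a:ℂ)-1) * ((1:ℂ)-x) ^ ((b:ℂ)-1) = ((x ^ (a-1) * (1-x) ^ (b-1) : ℝ) : ℂ) := by
    rw [show ((a:ℂ)-1) = ((a-1:ℝ):ℂ) by push_cast; ring,
      show ((b:ℂ)-1) = ((b-1:ℝ):ℂ) by push_cast; ring,
      show ((1:ℂ) - (x:ℂ)) = ((1-x:ℝ):ℂ) by push_cast; ring,
      ← Complex.ofReal_cpow hx.1.le, ← Complex.ofReal_cpow (by linarith [hx.2] : (0:ℝ) ≤ 1 - x)]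
    push_cast
    ring
  rw [this]
  simp

lemma lintegral_beta (a b : ℝ) (ha : 0 < a) (hb : 0 < b) :
    ∫⁻ x in Set.Ioo (0:ℝ) 1, ENNReal.ofReal (x ^ (a-1) * (1-x) ^ (b-1))
      = ENNReal.ofReal (Real.Gamma a * Real.Gamma b / Real.Gamma (a+b)) := by
  rw [← real_betaIntegral a b ha hb,
    ← MeasureTheory.ofReal_integral_eq_lintegral_ofReal (integrableOn_beta a b ha hb)]
  exact (ae_restrict_iff' measurableSet_Ioo).2 <| Filter.Eventually.of_forall fun x hx =>
    mul_nonneg (Real.rpow_nonneg hx.1.le _) (Real.rpow_nonneg (by linarith [hx.2]) _)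

lemma measurable_coordFull {K : ℕ} (c : Fin (K + 1)) : Measurable (coordFull c) := by
  unfold coordFull
  by_cases h : (c : ℕ) < K
  · simpa only [dif_pos h] using measurable_pi_apply _
  · simp only [dif_neg h]
    exact
      measurable_const.sub (Finset.measurable_sum Finset.univ fun i _ => measurable_pi_apply i)

lemma measurable_prodIntegrand {K : ℕ} (α : Fin (K + 1) → ℝ) :
    Measurable (fun z : Fin K → ℝ => ∏ c, (coordFull c z) ^ (α c - 1)) :=
  Finset.measurable_prod _ fun c _ => by
    have := measurable_coordFull (K := K) c
    fun_prop

lemma measurableSet_openSimplexParam (K : ℕ) : MeasurableSet (openSimplexParam K) := by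
  have : openSimplexParam K = (⋂ i, {z : Fin K → ℝ | 0 < z i}) ∩ {z | ∑ i, z i < 1} := by
    ext z; simp [openSimplexParam]
  rw [this]
  exact (MeasurableSet.iInter fun i =>
      measurableSet_lt measurable_const (measurable_pi_apply i)).inter
    (measurableSet_lt (Finset.measurable_sum _ fun i _ => measurable_pi_apply i) measurable_const)

lemma coordFull_pos {K : ℕ} {z : Fin K → ℝ} (hz : z ∈ openSimplexParam K) (c : Fin (K + 1)) :
    0 < coordFull c z := by
  unfold coordFull
  split_ifs with h
  · exact hz.1 _
  · linarith [hz.2]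

lemma coordFull_cons_succ {K : ℕ} (x : ℝ) (w : Fin K → ℝ) (j : Fin (K + 1)) :
    coordFull j.succ (Fin.cons x w) =
      if h : (j : ℕ) < K then w ⟨j, h⟩ else 1 - x - ∑ i, w i := by
  unfold coordFull
  rcases lt_or_ge (j : ℕ) K with h | h
  · rw [dif_pos (by simpa using Nat.succ_lt_succ h), dif_pos h]
    exact Fin.cons_succ (α := fun _ => ℝ) x w ⟨j, h⟩
  · rw [dif_neg (by simp; omega), dif_neg (by omega)]
    rw [Fin.sum_cons]
    ring

lemma coordFull_cons_scale {K : ℕ} (x : ℝ) (v : Fin K → ℝ) (j : Fin (K + 1)) :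
    coordFull j.succ (Fin.cons x ((1 - x) • v)) = (1 - x) * coordFull j v := by
  rw [coordFull_cons_succ]
  unfold coordFull
  split_ifs with h
  · simp [smul_eq_mul]
  · simp only [Pi.smul_apply, smul_eq_mul, ← Finset.mul_sum]
    ring

lemma coordFull_cons_zero {K : ℕ} (x : ℝ) (w : Fin K → ℝ) :
    coordFull (0 : Fin (K + 2)) (Fin.cons x w) = x := by
  unfold coordFull
  rw [dif_pos (by simp)]
  exact Fin.cons_zero (α := fun _ => ℝ) x w

lemma cons_mem_simplex_iff {K : ℕ} (x : ℝ) (w : Fin K → ℝ) :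
    Fin.cons x w ∈ openSimplexParam (K + 1) ↔
      0 < x ∧ (∀ i, 0 < w i) ∧ x + ∑ i, w i < 1 := by
  constructor
  · rintro ⟨h1, h2⟩
    rw [Fin.sum_cons] at h2
    exact ⟨by simpa using h1 0, fun i => by simpa using h1 i.succ, h2⟩
  · rintro ⟨h0, h1, h2⟩
    refine ⟨fun i => ?_, by rwa [Fin.sum_cons]⟩
    rcases Fin.eq_zero_or_eq_succ i with rfl | ⟨j, rfl⟩
    · simpa using h0
    · simpa using h1 j

lemma multiBeta_nonneg {K : ℕ} (α : Fin K → ℝ) (hα : ∀ c, 0 < α c) (hK : 0 < K) :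
    0 < multiBeta α := by
  have h : 0 < ∑ c, α c :=
    Finset.sum_pos (fun c _ => hα c) (Finset.univ_nonempty_iff.2 ⟨⟨0, hK⟩⟩)
  exact div_pos (Finset.prod_pos fun c _ => Real.Gamma_pos_of_pos (hα c))
    (Real.Gamma_pos_of_pos h)

lemma aux_lintegral : ∀ (K : ℕ) (α : Fin (K + 1) → ℝ), (∀ c, 0 < α c) →
    ∫⁻ z in openSimplexParam K, ENNReal.ofReal (∏ c, (coordFull c z) ^ (α c - 1))
      = ENNReal.ofReal (multiBeta α) := by
  intro K
  induction K with
  | zero =>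
    intro α hα
    have hS : openSimplexParam 0 = Set.univ := by
      ext z; simp [openSimplexParam]
    have hP : ∀ z : Fin 0 → ℝ, (∏ c, (coordFull c z) ^ (α c - 1)) = 1 := by
      intro z
      rw [Fin.prod_univ_one]
      simp [coordFull]
    have hB : multiBeta α = 1 := by
      unfold multiBeta
      rw [Fin.prod_univ_one, Fin.sum_univ_one, div_self (Real.Gamma_pos_of_pos (hα 0)).ne']
    simp only [hP, hS, Measure.restrict_univ, ENNReal.ofReal_one, lintegral_one, hB]
    simp [volume_pi, Measure.pi_univ]
  | succ K IH =>
    intro α hα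
    set β : Fin (K + 1) → ℝ := fun j => α j.succ with hβ
    have hβpos : ∀ j, 0 < β j := fun j => hα j.succ
    set s : ℝ := ∑ j, β j with hs
    have hspos : 0 < s :=
      Finset.sum_pos (fun j _ => hβpos j) ⟨0, Finset.mem_univ 0⟩
    have hBβ : 0 < multiBeta β := multiBeta_nonneg β hβpos K.succ_pos
    set F : (Fin (K + 1) → ℝ) → ENNReal := fun z =>
      Set.indicator (openSimplexParam (K + 1))
        (fun z => ENNReal.ofReal (∏ c, (coordFull c z) ^ (α c - 1))) z with hF
    have hFmeas : Measurable F :=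
      ((measurable_prodIntegrand α).ennreal_ofReal).indicator
        (measurableSet_openSimplexParam _)
    -- inner integral
    have inner : ∀ x : ℝ, (∫⁻ w : Fin K → ℝ, F (Fin.cons x w))
        = Set.indicator (Set.Ioo (0:ℝ) 1)
            (fun x => ENNReal.ofReal (x ^ (α 0 - 1) * (1 - x) ^ (s - 1) * multiBeta β)) x := by
      intro x
      by_cases hx : x ∈ Set.Ioo (0:ℝ) 1
      · obtain ⟨hx0, hx1⟩ := hx
        have ht : (0:ℝ) < 1 - x := by linarith
        have hg : Measurable fun w : Fin K → ℝ => F (Fin.cons x w) := by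
          have h1 : Measurable fun w : Fin K → ℝ => (Fin.cons x w : Fin (K+1) → ℝ) := by
            rw [measurable_pi_iff]
            intro i
            rcases Fin.eq_zero_or_eq_succ i with rfl | ⟨j, rfl⟩
            · simpa using measurable_const
            · simpa using measurable_pi_apply j
          exact hFmeas.comp h1
        have hmap : Measure.map ((1-x) • ·) ((ENNReal.ofReal ((1-x)^K)) • (volume : Measure (Fin K → ℝ))) = volume := by
          rw [Measure.map_smul, Measure.map_addHaar_smul (μ := volume) ht.ne']
          rw [smul_smul, Module.finrank_fin_fun]
          rw [abs_of_pos (by positivity), ← ENNReal.ofReal_mul (by positivity),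
            mul_inv_cancel₀ (by positivity), ENNReal.ofReal_one, one_smul]
        have subst : (∫⁻ w : Fin K → ℝ, F (Fin.cons x w))
            = ENNReal.ofReal ((1-x)^K) * ∫⁻ v : Fin K → ℝ, F (Fin.cons x ((1-x) • v)) := by
          conv_lhs => rw [← hmap]
          rw [lintegral_map hg (measurable_const_smul (1-x)), lintegral_smul_measure, smul_eq_mul]
        have hpt : ∀ v : Fin K → ℝ, F (Fin.cons x ((1-x) • v)) =
            Set.indicator (openSimplexParam K)
              (fun v => ENNReal.ofReal
                (x ^ (α 0 - 1) * (1-x) ^ (s - (K+1)) * ∏ j, coordFull j v ^ (β j - 1))) v := by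
          intro v
          by_cases hv : v ∈ openSimplexParam K
          · have hsum : ∑ i, ((1-x) • v) i = (1-x) * ∑ i, v i := by
              simp [Finset.mul_sum]
            have hmem : Fin.cons x ((1-x) • v) ∈ openSimplexParam (K + 1) := by
              rw [cons_mem_simplex_iff]
              refine ⟨hx0, fun i => mul_pos ht (hv.1 i), ?_⟩
              rw [hsum]
              nlinarith [hv.2]
            rw [hF]
            simp only [Set.indicator_of_mem hmem, Set.indicator_of_mem hv]
            congr 1
            rw [Fin.prod_univ_succ, coordFull_cons_zero]
            have hfac : ∀ j : Fin (K + 1),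
                coordFull j.succ (Fin.cons x ((1-x) • v)) ^ (α j.succ - 1)
                  = (1-x) ^ (β j - 1) * coordFull j v ^ (β j - 1) := by
              intro j
              rw [coordFull_cons_scale, Real.mul_rpow ht.le (coordFull_pos hv j).le]
            rw [Finset.prod_congr rfl (fun j _ => hfac j), Finset.prod_mul_distrib]
            have hprod : (∏ j : Fin (K+1), (1-x) ^ (β j - 1)) = (1-x) ^ (s - (K+1)) := by
              rw [← Real.rpow_sum_of_pos ht]
              congr 1
              rw [Finset.sum_sub_distrib]
              simp [hs]
            rw [hprod]
            ring
          · have hnot : Fin.cons x ((1-x) • v) ∉ openSimplexParam (K + 1) := by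
              intro hmem
              rw [cons_mem_simplex_iff] at hmem
              obtain ⟨_, h1, h2⟩ := hmem
              apply hv
              constructor
              · intro i
                have := h1 i
                simp only [Pi.smul_apply, smul_eq_mul] at this
                nlinarith
              · have hsum : ∑ i, ((1-x) • v) i = (1-x) * ∑ i, v i := by
                  simp [Finset.mul_sum]
                rw [hsum] at h2
                nlinarith
            rw [hF]
            simp only [Set.indicator_of_notMem hnot, Set.indicator_of_notMem hv]
        rw [subst]
        simp_rw [hpt]
        rw [lintegral_indicator (measurableSet_openSimplexParam K)]
        have hconst : ∀ v : Fin K → ℝ,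
            ENNReal.ofReal (x ^ (α 0 - 1) * (1-x) ^ (s - (K+1)) * ∏ j, coordFull j v ^ (β j - 1))
              = ENNReal.ofReal (x ^ (α 0 - 1) * (1-x) ^ (s - (K+1)))
                * ENNReal.ofReal (∏ j, coordFull j v ^ (β j - 1)) := fun v =>
          ENNReal.ofReal_mul (by positivity)
        simp_rw [hconst]
        rw [lintegral_const_mul _ ((measurable_prodIntegrand β).ennreal_ofReal), IH β hβpos]
        rw [Set.indicator_of_mem (show x ∈ Set.Ioo (0:ℝ) 1 from ⟨hx0, hx1⟩)]
        rw [← ENNReal.ofReal_mul (by positivity), ← ENNReal.ofReal_mul (by positivity)]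
        congr 1
        have hpow : (1-x)^K * (1-x) ^ (s - (K+1)) = (1-x) ^ (s - 1) := by
          rw [← Real.rpow_natCast (1-x) K, ← Real.rpow_add ht]
          congr 1
          push_cast
          ring
        linear_combination (x ^ (α 0 - 1) * multiBeta β) * hpow
      · have hzero : ∀ w : Fin K → ℝ, F (Fin.cons x w) = 0 := by
          intro w
          rw [hF]
          simp only []
          rw [Set.indicator_of_notMem]
          intro hmem
          rw [cons_mem_simplex_iff] at hmem
          obtain ⟨h0, h1, h2⟩ := hmem
          apply hx
          have : (0:ℝ) ≤ ∑ i, w i := Finset.sum_nonneg fun i _ => (h1 i).le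
          exact ⟨h0, by linarith⟩
        simp only [hzero]
        rw [lintegral_zero, Set.indicator_of_notMem hx]
    -- main chain
    have step1 : (∫⁻ z in openSimplexParam (K+1),
          ENNReal.ofReal (∏ c, (coordFull c z) ^ (α c - 1))) = ∫⁻ z, F z :=
      (lintegral_indicator (measurableSet_openSimplexParam _) _).symm
    have hsymm : ∀ p : ℝ × (Fin K → ℝ),
        (MeasurableEquiv.piFinSuccAbove (fun _ : Fin (K+1) => ℝ) 0).symm p
          = Fin.cons p.1 p.2 := by
      intro p
      show (Fin.insertNthEquiv (fun _ : Fin (K+1) => ℝ) 0) p = _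
      simp [Fin.insertNthEquiv, Fin.insertNth_zero']
    have step2 : (∫⁻ z, F z) = ∫⁻ p : ℝ × (Fin K → ℝ),
        F ((MeasurableEquiv.piFinSuccAbove (fun _ : Fin (K+1) => ℝ) 0).symm p) :=
      (((volume_preserving_piFinSuccAbove (fun _ : Fin (K+1) => ℝ) 0).symm).lintegral_comp
        hFmeas).symm
    have step3 : (∫⁻ p : ℝ × (Fin K → ℝ),
          F ((MeasurableEquiv.piFinSuccAbove (fun _ : Fin (K+1) => ℝ) 0).symm p))
        = ∫⁻ x : ℝ, ∫⁻ w : Fin K → ℝ, F (Fin.cons x w) := by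
      have hmeas2 : Measurable fun p : ℝ × (Fin K → ℝ) =>
          F ((MeasurableEquiv.piFinSuccAbove (fun _ : Fin (K+1) => ℝ) 0).symm p) :=
        hFmeas.comp (MeasurableEquiv.measurable _)
      rw [Measure.volume_eq_prod, MeasureTheory.lintegral_prod _ hmeas2.aemeasurable]
      simp_rw [hsymm]
    rw [step1, step2, step3]
    simp_rw [inner]
    rw [lintegral_indicator measurableSet_Ioo]
    have hsplit : ∀ x ∈ Set.Ioo (0:ℝ) 1,
        ENNReal.ofReal (x ^ (α 0 - 1) * (1-x) ^ (s-1) * multiBeta β)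
          = ENNReal.ofReal (x ^ (α 0 - 1) * (1-x) ^ (s-1)) * ENNReal.ofReal (multiBeta β) :=
      fun x hx => ENNReal.ofReal_mul
        (mul_nonneg (Real.rpow_nonneg hx.1.le _) (Real.rpow_nonneg (by linarith [hx.2]) _))
    rw [setLIntegral_congr_fun measurableSet_Ioo hsplit]
    rw [lintegral_mul_const _ (by fun_prop), lintegral_beta (α 0) s (hα 0) hspos]
    have hΓ0 : 0 < Real.Gamma (α 0) := Real.Gamma_pos_of_pos (hα 0)
    have hΓs : 0 < Real.Gamma s := Real.Gamma_pos_of_pos hspos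
    have hΓt : 0 < Real.Gamma (α 0 + s) :=
      Real.Gamma_pos_of_pos (by linarith [hα 0])
    rw [← ENNReal.ofReal_mul (le_of_lt (div_pos (mul_pos hΓ0 hΓs) hΓt))]
    congr 1
    have hsum2 : ∑ c : Fin (K+1+1), α c = α 0 + s := by
      rw [Fin.sum_univ_succ, hs]
    have hprod2 : ∏ c : Fin (K+1+1), Real.Gamma (α c)
        = Real.Gamma (α 0) * ∏ j, Real.Gamma (β j) := by
      rw [Fin.prod_univ_succ]
    have hBβ' : multiBeta β = (∏ j, Real.Gamma (β j)) / Real.Gamma s := by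
      unfold multiBeta
      rw [← hs]
    have hBα : multiBeta α = (Real.Gamma (α 0) * ∏ j, Real.Gamma (β j)) / Real.Gamma (α 0 + s) := by
      unfold multiBeta
      rw [hsum2, hprod2]
    rw [hBβ', hBα]
    field_simp

/-- The multivariate Beta function is the normalizing constant of the Dirichlet density:
the integral of `∏ y_c^{α_c - 1}` over the open simplex equals `B(α)`. -/
theorem dirichlet_normalization {K : ℕ} (α : Fin (K + 1) → ℝ) (hα : ∀ c, 0 < α c) :
    ∫ z in openSimplexParam K, ∏ c, (coordFull c z) ^ (α c - 1) = multiBeta α := by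
  have hS := measurableSet_openSimplexParam K
  have hnn : 0 ≤ᵐ[volume.restrict (openSimplexParam K)]
      fun z => ∏ c, (coordFull c z) ^ (α c - 1) :=
    (ae_restrict_iff' hS).2 (Filter.Eventually.of_forall fun z hz =>
      Finset.prod_nonneg fun c _ => Real.rpow_nonneg (coordFull_pos hz c).le _)
  rw [MeasureTheory.integral_eq_lintegral_of_nonneg_ae hnn
    ((measurable_prodIntegrand α).aestronglyMeasurable)]
  rw [aux_lintegral K α hα, ENNReal.toReal_ofReal (multiBeta_nonneg α hα K.succ_pos).le]
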